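/- Let V be a real inner product space with inner product a(·,·), W ⊆ V a finite-dimensional subspace, and Π : V → W the a-orthogonal projection onto W. Suppose S : V × V → ℝ is a symmetric bilinear form such that c₀ a(v,v) ≤ S(v,v) ≤ c₁ a(v,v) for all v ∈ ker Π, with constants 0 < c₀ ≤ c₁. Define a_h(u,v) := a(Πu, Πv) + S(u − Πu, v − Πv). Then a_h is consistent, i.e. a_h(p, v) = a(p, v) for all p ∈ W and v ∈ V, and stable, i.e. min(1, c₀) a(v,v) ≤ a_h(v,v) ≤ max(1, c₁) a(v,v) for all v ∈ V. -/

import Mathlib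

open RealInnerProductSpace

/-- Consistency and stability of the VEM discrete bilinear form
`a_h(u,v) = a(Πu, Πv) + S(u - Πu, v - Πv)` built from the `a`-orthogonal
projection `Π` onto a finite-dimensional subspace `W` and a stabilizing
symmetric bilinear form `S` spectrally equivalent to `a` on `ker Π`. -/
theorem stmt5
    {V : Type*} [NormedAddCommGroup V] [InnerProductSpace ℝ V]
    (W : Submodule ℝ V) [FiniteDimensional ℝ W] [Submodule.HasOrthogonalProjection W]
    (S : V →ₗ[ℝ] V →ₗ[ℝ] ℝ) (hSsym : ∀ u v : V, S u v = S v u)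
    (c₀ c₁ : ℝ) (hc₀ : 0 < c₀) (hc₀c₁ : c₀ ≤ c₁)
    (hS : ∀ v : V, (Submodule.orthogonalProjectionOnto W v : V) = 0 →
        c₀ * ⟪v, v⟫ ≤ S v v ∧ S v v ≤ c₁ * ⟪v, v⟫) :
    (∀ p ∈ W, ∀ v : V,
        ⟪(Submodule.orthogonalProjectionOnto W p : V), (Submodule.orthogonalProjectionOnto W v : V)⟫ +
          S (p - Submodule.orthogonalProjectionOnto W p) (v - Submodule.orthogonalProjectionOnto W v) = ⟪p, v⟫) ∧
    (∀ v : V,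
        min 1 c₀ * ⟪v, v⟫ ≤
          ⟪(Submodule.orthogonalProjectionOnto W v : V), (Submodule.orthogonalProjectionOnto W v : V)⟫ +
            S (v - Submodule.orthogonalProjectionOnto W v) (v - Submodule.orthogonalProjectionOnto W v) ∧
        ⟪(Submodule.orthogonalProjectionOnto W v : V), (Submodule.orthogonalProjectionOnto W v : V)⟫ +
            S (v - Submodule.orthogonalProjectionOnto W v) (v - Submodule.orthogonalProjectionOnto W v) ≤
          max 1 c₁ * ⟪v, v⟫) := by
  have hPw : ∀ v : V, (Submodule.orthogonalProjectionOnto W (v - Submodule.orthogonalProjectionOnto W v) : V) = 0 := by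
    intro v
    have := Submodule.sub_starProjection_mem_orthogonal (K := W) v
    simpa using congrArg (Subtype.val) (Submodule.orthogonalProjectionOnto_apply_of_mem_orthogonal this)
  have hpyth : ∀ v : V, ⟪v, v⟫ = ⟪(Submodule.orthogonalProjectionOnto W v : V), (Submodule.orthogonalProjectionOnto W v : V)⟫ +
      ⟪v - Submodule.orthogonalProjectionOnto W v, v - Submodule.orthogonalProjectionOnto W v⟫ := by
    intro v
    set x := (Submodule.orthogonalProjectionOnto W v : V) with hx
    have horth : ⟪x, v - x⟫ = 0 :=
      (Submodule.sub_starProjection_mem_orthogonal (K := W) v) _ (Submodule.orthogonalProjectionOnto W v).2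
    have hv : v = x + (v - x) := by abel
    calc ⟪v, v⟫ = ⟪x + (v - x), x + (v - x)⟫ := by rw [← hv]
      _ = ⟪x, x⟫ + ⟪v - x, v - x⟫ := by
          rw [inner_add_add_self, horth]
          have h2 : ⟪v - x, x⟫ = 0 := by rw [real_inner_comm]; exact horth
          rw [h2]; ring
  constructor
  · intro p hp v
    have hPp : (Submodule.orthogonalProjectionOnto W p : V) = p := Submodule.starProjection_eq_self_iff.mpr hp
    rw [hPp, sub_self]
    simp only [map_zero, LinearMap.zero_apply, add_zero]
    have horth : ⟪p, v - Submodule.orthogonalProjectionOnto W v⟫ = 0 :=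
      (Submodule.sub_starProjection_mem_orthogonal (K := W) v) _ hp
    rw [inner_sub_right] at horth
    linarith
  · intro v
    obtain ⟨h1, h2⟩ := hS _ (hPw v)
    have hA : 0 ≤ ⟪(Submodule.orthogonalProjectionOnto W v : V), (Submodule.orthogonalProjectionOnto W v : V)⟫ :=
      real_inner_self_nonneg
    have hB : 0 ≤ ⟪v - Submodule.orthogonalProjectionOnto W v, v - Submodule.orthogonalProjectionOnto W v⟫ :=
      real_inner_self_nonneg
    have hp := hpyth v
    constructor
    · have hmin1 : min 1 c₀ ≤ 1 := min_le_left _ _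
      have hmin2 : min 1 c₀ ≤ c₀ := min_le_right _ _
      nlinarith
    · have hmax1 : 1 ≤ max 1 c₁ := le_max_left _ _
      have hmax2 : c₁ ≤ max 1 c₁ := le_max_right _ _
      nlinarith
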